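/- Assuming 12 ↛ (4)^3_2 (Isbell's result), for every k ≥ 3 we have (2k+6) ↛ (k+1)^k_2; that is, there is a 2-coloring of the k-element subsets of {0,...,2k+5} with no homogeneous set of cardinality k+1. -/

import Mathlib

/-- `Y` is homogeneous for the coloring `f` on `e`-element subsets. -/
def Homog {c : ℕ} (f : Finset ℕ → Fin c) (e : ℕ) (Y : Finset ℕ) : Prop :=
  ∀ s ⊆ Y, ∀ t ⊆ Y, s.card = e → t.card = e → f s = f t

/-- `n ↛ (m)^e_c`: there exists a coloring of the `e`-element subsets of
`{0,...,n-1}` into `c` colors with no homogeneous subset of cardinality `m`. -/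
def NoArrow (n m e c : ℕ) : Prop :=
  ∃ f : Finset ℕ → Fin c, ∀ Y ⊆ Finset.range n, Y.card = m → ¬ Homog f e Y

lemma fin2_ne_add_one (x : Fin 2) : x ≠ x + 1 := by fin_cases x <;> decide

/-- Negative stepping-up: `n ↛ (e+1)^e_2` implies `(n+2) ↛ (e+2)^(e+1)_2`. -/
lemma noArrow_step (n e : ℕ) (h : NoArrow n (e + 1) e 2) :
    NoArrow (n + 2) (e + 2) (e + 1) 2 := by
  obtain ⟨f, hf⟩ := h
  refine ⟨fun t => if n + 1 ∈ t then f (t.erase (n + 1)) + 1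
            else if n ∈ t then f (t.erase n)
            else f (t.erase (t.sup id)), ?_⟩
  intro Y hY hcard hH
  by_cases h1 : n + 1 ∈ Y <;> by_cases h0 : n ∈ Y
  · -- both new elements in Y
    set s' := Y.erase (n + 1) with hs'
    set t' := Y.erase n with ht'
    have hs'Y : s' ⊆ Y := Finset.erase_subset _ _
    have ht'Y : t' ⊆ Y := Finset.erase_subset _ _
    have hcs : s'.card = e + 1 := by rw [hs', Finset.card_erase_of_mem h1, hcard]; omega
    have hct : t'.card = e + 1 := by rw [ht', Finset.card_erase_of_mem h0, hcard]; omega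
    have key := hH s' hs'Y t' ht'Y hcs hct
    have hns' : n ∈ s' := Finset.mem_erase.mpr ⟨by omega, h0⟩
    have hn1t' : n + 1 ∈ t' := Finset.mem_erase.mpr ⟨by omega, h1⟩
    simp only [Finset.notMem_erase, if_false, if_neg (Finset.notMem_erase _ _),
      if_neg (show n + 1 ∉ s' from Finset.notMem_erase _ _), if_pos hns', if_pos hn1t'] at key
    rw [Finset.erase_right_comm] at key
    exact fin2_ne_add_one _ key
  · -- only n+1 in Y
    set Z := Y.erase (n + 1) with hZ
    have hZn : Z ⊆ Finset.range n := by
      intro x hx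
      obtain ⟨hx1, hxY⟩ := Finset.mem_erase.mp hx
      have := Finset.mem_range.mp (hY hxY)
      have : x ≠ n := fun he => h0 (he ▸ hxY)
      simp only [Finset.mem_range]; omega
    have hZc : Z.card = e + 1 := by rw [hZ, Finset.card_erase_of_mem h1, hcard]; omega
    have := hf Z hZn hZc
    rw [Homog] at this; push_neg at this
    obtain ⟨s, hsZ, t, htZ, hsc, htc, hst⟩ := this
    have hn1s : n + 1 ∉ s := fun h => by simpa using Finset.mem_range.mp (hZn (hsZ h))
    have hn1t : n + 1 ∉ t := fun h => by simpa using Finset.mem_range.mp (hZn (htZ h))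
    have hsY : insert (n + 1) s ⊆ Y :=
      Finset.insert_subset h1 (hsZ.trans (Finset.erase_subset _ _))
    have htY : insert (n + 1) t ⊆ Y :=
      Finset.insert_subset h1 (htZ.trans (Finset.erase_subset _ _))
    have key := hH _ hsY _ htY (by rw [Finset.card_insert_of_notMem hn1s, hsc])
      (by rw [Finset.card_insert_of_notMem hn1t, htc])
    simp only [if_pos (Finset.mem_insert_self (n+1) s), if_pos (Finset.mem_insert_self (n+1) t),
      Finset.erase_insert hn1s, Finset.erase_insert hn1t] at key
    exact hst (add_right_cancel key)
  · -- only n in Y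
    set Z := Y.erase n with hZ
    have hZn : Z ⊆ Finset.range n := by
      intro x hx
      obtain ⟨hx1, hxY⟩ := Finset.mem_erase.mp hx
      have := Finset.mem_range.mp (hY hxY)
      have : x ≠ n + 1 := fun he => h1 (he ▸ hxY)
      simp only [Finset.mem_range]; omega
    have hZc : Z.card = e + 1 := by rw [hZ, Finset.card_erase_of_mem h0, hcard]; omega
    have := hf Z hZn hZc
    rw [Homog] at this; push_neg at this
    obtain ⟨s, hsZ, t, htZ, hsc, htc, hst⟩ := this
    have hns : n ∉ s := fun h => by simpa using Finset.mem_range.mp (hZn (hsZ h))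
    have hnt : n ∉ t := fun h => by simpa using Finset.mem_range.mp (hZn (htZ h))
    have hn1s : n + 1 ∉ insert n s := by
      simp only [Finset.mem_insert]
      rintro (he | hmem)
      · omega
      · have := Finset.mem_range.mp (hZn (hsZ hmem)); omega
    have hn1t : n + 1 ∉ insert n t := by
      simp only [Finset.mem_insert]
      rintro (he | hmem)
      · omega
      · have := Finset.mem_range.mp (hZn (htZ hmem)); omega
    have hsY : insert n s ⊆ Y := Finset.insert_subset h0 (hsZ.trans (Finset.erase_subset _ _))
    have htY : insert n t ⊆ Y := Finset.insert_subset h0 (htZ.trans (Finset.erase_subset _ _))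
    have key := hH _ hsY _ htY (by rw [Finset.card_insert_of_notMem hns, hsc])
      (by rw [Finset.card_insert_of_notMem hnt, htc])
    simp only [if_neg hn1s, if_neg hn1t, if_pos (Finset.mem_insert_self n s),
      if_pos (Finset.mem_insert_self n t), Finset.erase_insert hns,
      Finset.erase_insert hnt] at key
    exact hst key
  · -- Y ⊆ range n
    have hYn : Y ⊆ Finset.range n := by
      intro x hx
      have := Finset.mem_range.mp (hY hx)
      have hx0 : x ≠ n := fun he => h0 (he ▸ hx)
      have hx1 : x ≠ n + 1 := fun he => h1 (he ▸ hx)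
      simp only [Finset.mem_range]; omega
    have hne : Y.Nonempty := Finset.card_pos.mp (by omega)
    set m := Y.max' hne with hm
    set Z := Y.erase m with hZ
    have hmY : m ∈ Y := Y.max'_mem hne
    have hZc : Z.card = e + 1 := by rw [hZ, Finset.card_erase_of_mem hmY, hcard]; omega
    have := hf Z ((Finset.erase_subset _ _).trans hYn) hZc
    rw [Homog] at this; push_neg at this
    obtain ⟨s, hsZ, t, htZ, hsc, htc, hst⟩ := this
    have hms : m ∉ s := fun h => (Finset.mem_erase.mp (hsZ h)).1 rfl
    have hmt : m ∉ t := fun h => (Finset.mem_erase.mp (htZ h)).1 rfl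
    have hsY : insert m s ⊆ Y := Finset.insert_subset hmY (hsZ.trans (Finset.erase_subset _ _))
    have htY : insert m t ⊆ Y := Finset.insert_subset hmY (htZ.trans (Finset.erase_subset _ _))
    have hsup : ∀ u : Finset ℕ, u ⊆ Y → m ∈ u → u.sup id = m := by
      intro u huY hmu
      refine le_antisymm (Finset.sup_le fun x hx => Y.le_max' x (huY hx)) ?_
      exact Finset.le_sup (f := id) hmu
    have hnots : ∀ u : Finset ℕ, u ⊆ Y → n + 1 ∉ u ∧ n ∉ u := by
      intro u huY
      constructor <;> intro hmem <;>
        · have := Finset.mem_range.mp (hYn (huY hmem)); omega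
    have key := hH _ hsY _ htY (by rw [Finset.card_insert_of_notMem hms, hsc])
      (by rw [Finset.card_insert_of_notMem hmt, htc])
    simp only [if_neg (hnots _ hsY).1, if_neg (hnots _ hsY).2, if_neg (hnots _ htY).1,
      if_neg (hnots _ htY).2, hsup _ hsY (Finset.mem_insert_self m s),
      hsup _ htY (Finset.mem_insert_self m t),
      Finset.erase_insert hms, Finset.erase_insert hmt] at key
    exact hst key

/-- Assuming Isbell's result `12 ↛ (4)^3_2`, for every `k ≥ 3` we have
`(2k+6) ↛ (k+1)^k_2`. -/
theorem stmt3 (h : NoArrow 12 4 3 2) : ∀ k : ℕ, 3 ≤ k → NoArrow (2 * k + 6) (k + 1) k 2 := by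
  intro k hk
  induction k, hk using Nat.le_induction with
  | base => exact h
  | succ k hk ih =>
    have h2 := noArrow_step (2 * k + 6) k ih
    have heq : 2 * (k + 1) + 6 = 2 * k + 6 + 2 := by ring
    rw [heq]
    exact h2
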